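/- Let K be a field that contains an algebraically closed subfield. Then the set K̃ of arithmetically fixed elements of K is exactly the prime subfield of K (the smallest subfield of K). -/

import Mathlib

set_option maxHeartbeats 1000000
set_option synthInstance.maxHeartbeats 400000

/-- A map `f` is *arithmetic* on a subset `A` of a field `K`. -/
def ArithmeticMap {K : Type*} [Field K] (A : Set K) (f : K → K) : Prop :=
  ((1 : K) ∈ A → f 1 = 1) ∧
  (∀ a b : K, a ∈ A → b ∈ A → a + b ∈ A → f (a + b) = f a + f b) ∧
  (∀ a b : K, a ∈ A → b ∈ A → a * b ∈ A → f (a * b) = f a * f b)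

/-- An element `r` of a field `K` is *arithmetically fixed* if there is a finite set
`A ⊆ K` with `r ∈ A` such that every arithmetic map `f : A → K` fixes `r`. -/
def ArithFixed {K : Type*} [Field K] (r : K) : Prop :=
  ∃ A : Finset K, r ∈ A ∧ ∀ f : K → K, ArithmeticMap (↑A : Set K) f → f r = r

section Aux

variable {K : Type*} [Field K]

/-- Every element of the prime subfield is an integer ratio. -/
lemma mem_bot_ratio {r : K} (h : r ∈ (⊥ : Subfield K)) :
    ∃ (a : ℤ) (b : ℕ), 0 < b ∧ (b : K) ≠ 0 ∧ r * b = a := by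
  let S : Subfield K :=
  { carrier := {x : K | ∃ (a : ℤ) (b : ℕ), 0 < b ∧ (b : K) ≠ 0 ∧ x * b = a}
    one_mem' := ⟨1, 1, by norm_num⟩
    mul_mem' := by
      rintro x y ⟨a, b, hb, hbK, hx⟩ ⟨c, d, hd, hdK, hy⟩
      exact ⟨a * c, b * d, by positivity, by push_cast; exact mul_ne_zero hbK hdK,
        by push_cast; rw [← hx, ← hy]; ring⟩
    add_mem' := by
      rintro x y ⟨a, b, hb, hbK, hx⟩ ⟨c, d, hd, hdK, hy⟩
      refine ⟨a * d + c * b, b * d, by positivity, by push_cast; exact mul_ne_zero hbK hdK, ?_⟩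
      push_cast
      rw [← hx, ← hy]; ring
    zero_mem' := ⟨0, 1, by norm_num⟩
    neg_mem' := by
      rintro x ⟨a, b, hb, hbK, hx⟩
      exact ⟨-a, b, hb, hbK, by push_cast; rw [← hx]; ring⟩
    inv_mem' := by
      rintro x ⟨a, b, hb, hbK, hx⟩
      rcases eq_or_ne x 0 with rfl | hx0
      · exact ⟨0, 1, by norm_num⟩
      · have haK : (a : K) ≠ 0 := by rw [← hx]; exact mul_ne_zero hx0 hbK
        have ha : a ≠ 0 := by rintro rfl; simp at haK
        have hor : ((a.natAbs : ℕ) : K) = (a : K) ∨ ((a.natAbs : ℕ) : K) = -(a : K) := by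
          rcases Int.natAbs_eq a with h' | h'
          · left
            have h2 : ((a.natAbs : ℤ) : K) = ((a.natAbs : ℕ) : K) := Int.cast_natCast _
            rw [← h2]
            exact congrArg (fun z : ℤ => (z : K)) h'.symm
          · right
            have h2 : ((a.natAbs : ℤ) : K) = ((a.natAbs : ℕ) : K) := Int.cast_natCast _
            rw [← h2, ← Int.cast_neg]
            exact congrArg (fun z : ℤ => (z : K)) (by omega)
        have hnaK : ((a.natAbs : ℕ) : K) ≠ 0 := by
          rcases hor with h' | h' <;> rw [h'] <;> simpa using haK
        rcases hor with h' | h'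
        · refine ⟨(b : ℤ), a.natAbs, Int.natAbs_pos.mpr ha, hnaK, ?_⟩
          rw [h']
          push_cast
          rw [← hx]
          field_simp
        · refine ⟨-(b : ℤ), a.natAbs, Int.natAbs_pos.mpr ha, hnaK, ?_⟩
          rw [h']
          push_cast
          rw [← hx]
          field_simp }
  exact (bot_le : (⊥ : Subfield K) ≤ S) h

variable {K : Type*} [Field K]

lemma arithFixed_of_mem_bot {r : K} (h : r ∈ (⊥ : Subfield K)) : ArithFixed r := by
  classical
  obtain ⟨a, b, hb, hbK, hrb⟩ := mem_bot_ratio h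
  set N : ℕ := max a.natAbs b with hN
  refine ⟨((Finset.range (N + 1)).image (fun n : ℕ => (n : K))) ∪ {r, ((a : ℤ) : K)},
    by simp, ?_⟩
  intro f hf
  obtain ⟨hf1, hfadd, hfmul⟩ := hf
  set A : Finset K := ((Finset.range (N + 1)).image (fun n : ℕ => (n : K))) ∪ {r, ((a : ℤ) : K)}
    with hA
  have hmemN : ∀ n : ℕ, n ≤ N → ((n : K) ∈ (A : Set K)) := by
    intro n hn
    simp only [hA, Finset.coe_union, Set.mem_union, Finset.coe_image, Set.mem_image]
    exact Or.inl ⟨n, by simpa using Nat.lt_succ_of_le hn, rfl⟩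
  have hbN : b ≤ N := le_max_right _ _
  have haN : a.natAbs ≤ N := le_max_left _ _
  have hNpos : 1 ≤ N := le_trans hb hbN
  have hrA : r ∈ (A : Set K) := by simp [hA]
  have haA : ((a : ℤ) : K) ∈ (A : Set K) := by simp [hA]
  have h0 : f 0 = 0 := by
    have := hfadd 0 0 (by simpa using hmemN 0 (Nat.zero_le N))
      (by simpa using hmemN 0 (Nat.zero_le N)) (by simpa using hmemN 0 (Nat.zero_le N))
    simp only [add_zero] at this
    exact (left_eq_add.mp this)
  have h1 : f 1 = 1 := hf1 (by simpa using hmemN 1 hNpos)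
  have hcast : ∀ n : ℕ, n ≤ N → f (n : K) = (n : K) := by
    intro n
    induction n with
    | zero => intro _; simpa using h0
    | succ m ih =>
      intro hm
      have hmN : m ≤ N := le_trans (Nat.le_succ m) hm
      have := hfadd (m : K) 1 (hmemN m hmN) (by simpa using hmemN 1 hNpos)
        (by simpa using hmemN (m + 1) hm)
      push_cast
      push_cast at this
      rw [this, ih hmN, h1]
  have hfb : f (b : K) = (b : K) := hcast b hbN
  have hfa : f ((a : ℤ) : K) = ((a : ℤ) : K) := by
    rcases Int.natAbs_eq a with h' | h'
    · have : ((a : ℤ) : K) = ((a.natAbs : ℕ) : K) := by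
        rw [← Int.cast_natCast (R := K)]
        exact congrArg (fun z : ℤ => (z : K)) h'
      rw [this]
      exact hcast a.natAbs haN
    · have hsum : ((a : ℤ) : K) + ((a.natAbs : ℕ) : K) = 0 := by
        rw [← Int.cast_natCast (R := K), ← Int.cast_add]
        simpa using congrArg (fun z : ℤ => (z : K)) (by omega : a + (a.natAbs : ℤ) = 0)
      have := hfadd ((a : ℤ) : K) ((a.natAbs : ℕ) : K) haA (hmemN a.natAbs haN)
        (by rw [hsum]; simpa using hmemN 0 (Nat.zero_le N))
      rw [hsum, h0, hcast a.natAbs haN] at this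
      have h2 : f ((a : ℤ) : K) = -((a.natAbs : ℕ) : K) :=
        eq_neg_of_add_eq_zero_left this.symm
      rw [h2]
      exact (eq_neg_of_add_eq_zero_left hsum).symm
  have := hfmul r (b : K) hrA (hmemN b hbN) (by rw [hrb]; exact haA)
  rw [hrb, hfa, hfb] at this
  have : r * (b : K) = f r * (b : K) := by rw [hrb, this]
  exact (mul_right_cancel₀ hbK this.symm)


/-- Residue homomorphism: a finite-type algebra over a field `L` admits a ring hom to any
algebraically closed field extension-target of `L`, compatible with `L`, with algebraic values. -/
lemma exists_residue_hom (L : Type*) [Field L] (R : Type*) [CommRing R] [Nontrivial R]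
    [Algebra L R] [Algebra.FiniteType L R]
    (F' : Type*) [Field F'] [IsAlgClosed F'] [Algebra L F'] :
    ∃ ψ : R →+* F', (∀ x : L, ψ (algebraMap L R x) = algebraMap L F' x) ∧
      ∀ y : R, IsAlgebraic L (ψ y) := by
  obtain ⟨m, hm⟩ := Ideal.exists_maximal R
  haveI : Algebra.FiniteType L (R ⧸ m) :=
    Algebra.FiniteType.of_surjective (Ideal.Quotient.mkₐ L m)
      (Ideal.Quotient.mkₐ_surjective L m)
  letI : Field (R ⧸ m) := Ideal.Quotient.field m
  haveI : Module.Finite L (R ⧸ m) := finite_of_finite_type_of_isJacobsonRing L (R ⧸ m)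
  haveI : Algebra.IsAlgebraic L (R ⧸ m) := Algebra.IsAlgebraic.of_finite L (R ⧸ m)
  let τ : (R ⧸ m) →ₐ[L] F' := IsAlgClosed.lift
  refine ⟨τ.toRingHom.comp (Ideal.Quotient.mk m), fun x => ?_, fun y => ?_⟩
  · simpa using τ.commutes x
  · exact (Algebra.IsAlgebraic.isAlgebraic (Ideal.Quotient.mk m y)).algHom τ


lemma perfectField_bot (K : Type*) [Field K] : PerfectField (⊥ : Subfield K) := by
  obtain ⟨p, hp⟩ := CharP.exists K
  rcases CharP.char_is_prime_or_zero K p with hprime | hzero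
  · haveI : Fact p.Prime := ⟨hprime⟩
    let S : Subfield K :=
    { carrier := {x : K | frobenius K p x = x}
      one_mem' := map_one _
      mul_mem' := by rintro x y hx hy; simp only [Set.mem_setOf_eq] at *; rw [map_mul, hx, hy]
      add_mem' := by rintro x y hx hy; simp only [Set.mem_setOf_eq] at *; rw [map_add, hx, hy]
      zero_mem' := map_zero _
      neg_mem' := by rintro x hx; simp only [Set.mem_setOf_eq] at *; rw [map_neg, hx]
      inv_mem' := by rintro x hx; simp only [Set.mem_setOf_eq] at *; rw [map_inv₀, hx] }
    have hfix : ∀ x : (⊥ : Subfield K), x ^ p = x := by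
      rintro ⟨x, hx⟩
      have h2 : x ∈ S := (bot_le : (⊥ : Subfield K) ≤ S) hx
      have h3 : x ^ p = x := by
        have := h2
        simp only [S, Subfield.mem_mk, Set.mem_setOf_eq, frobenius_def] at this
        exact this
      exact Subtype.ext (by push_cast; exact h3)
    haveI : CharP (⊥ : Subfield K) p :=
      (algebraMap (⊥ : Subfield K) K).charP (algebraMap (⊥ : Subfield K) K).injective p
    haveI : PerfectRing (⊥ : Subfield K) p :=
      PerfectRing.ofSurjective _ p (fun y => ⟨y, by rw [frobenius_def]; exact hfix y⟩)
    exact PerfectRing.toPerfectField _ p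
  · subst hzero
    haveI : CharZero K := CharP.charP_to_charZero K
    haveI : CharZero (⊥ : Subfield K) :=
      ⟨fun a b h => Nat.cast_injective (R := K) (by
        have := congrArg (Subtype.val) h
        push_cast at this
        exact_mod_cast this)⟩
    exact PerfectField.ofCharZero


open scoped IntermediateField


/-- If `r` is not in the prime subfield, there is a ring hom on the adjoin-algebra moving `r`. -/
lemma exists_hom_ne (F : Subfield K) (hF : IsAlgClosed F) {r : K}
    (hr : r ∉ (⊥ : Subfield K)) (A : Finset K) (hrA : r ∈ A) :
    ∃ ψ : (Algebra.adjoin (⊥ : Subfield K) ((A : Set K)) : Subalgebra (⊥ : Subfield K) K) →+* K,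
      ψ ⟨r, Algebra.subset_adjoin hrA⟩ ≠ r := by
  haveI := hF
  classical
  set k := (⊥ : Subfield K) with hk
  set R : Subalgebra k K := Algebra.adjoin k ((A : Set K)) with hR
  have hrR : r ∈ R := Algebra.subset_adjoin hrA
  haveI hRft : Algebra.FiniteType k R :=
    (Subalgebra.fg_iff_finiteType R).mp (Subalgebra.fg_adjoin_finset A)
  by_cases halg : IsAlgebraic k r
  · -- algebraic case
    have hint : IsIntegral k r := halg.isIntegral
    set L : IntermediateField k K := k⟮r⟯ with hL
    set pb : PowerBasis k L := IntermediateField.adjoin.powerBasis hint with hpb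
    -- the minimal polynomial has at least two roots in F, pick one different from r
    haveI : PerfectField k := perfectField_bot K
    letI : Algebra k F := (Subfield.inclusion (bot_le : k ≤ F)).toAlgebra
    have hsep : (minpoly k r).Separable :=
      PerfectField.separable_of_irreducible (minpoly.irreducible hint)
    have hsplit : ((minpoly k r).map (algebraMap k F)).roots.card = (minpoly k r).natDegree :=
      IsAlgClosed.card_roots_map_eq_natDegree_from_simpleRing _ _
    have hnodup : ((minpoly k r).map (algebraMap k F)).roots.Nodup :=
      Polynomial.nodup_roots hsep.map
    have hdeg : 2 ≤ (minpoly k r).natDegree := by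
      rw [minpoly.two_le_natDegree_iff hint]
      rintro ⟨x, rfl⟩
      exact hr x.2
    have hroot : ∃ r' : F, r' ∈ ((minpoly k r).map (algebraMap k F)).roots ∧ (r' : K) ≠ r := by
      by_cases hrF : r ∈ F
      · have hcard : 1 < ((minpoly k r).map (algebraMap k F)).roots.toFinset.card := by
          rw [Multiset.toFinset_card_eq_card_iff_nodup.mpr hnodup, hsplit]; omega
        obtain ⟨r', hrt, hne⟩ :=
          Finset.exists_mem_ne hcard ⟨r, hrF⟩
        exact ⟨r', Multiset.mem_toFinset.mp hrt, fun h => hne (Subtype.ext h)⟩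
      · have hcard : 0 < ((minpoly k r).map (algebraMap k F)).roots.card := by omega
        obtain ⟨r', hrt⟩ := Multiset.card_pos_iff_exists_mem.mp hcard
        exact ⟨r', hrt, fun h => hrF (h ▸ r'.2)⟩
    obtain ⟨r', hr'root, hr'ne⟩ := hroot
    have haeval : (Polynomial.aeval r') (minpoly k r) = 0 := by
      have hne : (minpoly k r).map (algebraMap k F) ≠ 0 :=
        Polynomial.map_ne_zero (minpoly.ne_zero hint)
      have h5 := (Polynomial.mem_roots hne).mp hr'root
      rw [Polynomial.aeval_def, Polynomial.eval₂_eq_eval_map]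
      exact h5
    -- the embedding of L into F sending r to r'
    set σ : L →ₐ[k] F := pb.lift r' (by
      rw [hpb, IntermediateField.adjoin.powerBasis_gen, IntermediateField.minpoly_gen]
      exact haeval) with hσ
    have hσgen : σ pb.gen = r' := pb.lift_gen r' _
    -- L sits inside R
    have hsubset : ∀ x : L, (x : K) ∈ R := by
      intro x
      have h1 : L.toSubalgebra ≤ R := by
        rw [hL, IntermediateField.adjoin_simple_toSubalgebra_of_isAlgebraic halg]
        exact Algebra.adjoin_le (Set.singleton_subset_iff.mpr hrR)
      exact h1 x.2
    set ι : L →+* R :=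
    { toFun := fun x => ⟨(x : K), hsubset x⟩
      map_one' := rfl
      map_mul' := fun x y => rfl
      map_add' := fun x y => rfl
      map_zero' := rfl } with hι
    letI : Algebra L R := ι.toAlgebra
    haveI : IsScalarTower k L R := IsScalarTower.of_algebraMap_eq' rfl
    haveI : Algebra.FiniteType L R :=
      Algebra.FiniteType.of_restrictScalars_finiteType (R := k) (S := L) (A := R)
    letI : Algebra L F := σ.toRingHom.toAlgebra
    obtain ⟨ψ₀, hcomp, -⟩ := exists_residue_hom L R F
    refine ⟨F.subtype.comp ψ₀, ?_⟩
    have h1 : (⟨r, hrR⟩ : R) = algebraMap L R pb.gen := rfl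
    have h2 : (F.subtype.comp ψ₀) ⟨r, hrR⟩ = (σ pb.gen : K) := by
      rw [RingHom.comp_apply, h1, hcomp pb.gen]
      rfl
    rw [h2, hσgen]
    exact hr'ne
  · -- transcendental case
    letI : Algebra k F := (Subfield.inclusion (bot_le : k ≤ F)).toAlgebra
    obtain ⟨ψ₀, hcomp, halgv⟩ := exists_residue_hom k R F
    refine ⟨F.subtype.comp ψ₀, fun heq => halg ?_⟩
    have h1 : IsAlgebraic k (ψ₀ ⟨r, hrR⟩) := halgv _
    set Fk : F →ₐ[k] K := { toRingHom := F.subtype, commutes' := fun x => rfl } with hFk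
    have h2 : IsAlgebraic k (Fk (ψ₀ ⟨r, hrR⟩)) := h1.algHom Fk
    have h3 : Fk (ψ₀ ⟨r, hrR⟩) = r := heq
    rwa [h3] at h2

end Aux

/-- If a field `K` contains an algebraically closed subfield, then the set of arithmetically
fixed elements of `K` is exactly the prime subfield of `K` (the smallest subfield `⊥`). -/
theorem arithFixed_eq_prime_subfield (K : Type*) [Field K]
    (F : Subfield K) (hF : IsAlgClosed F) :
    {r : K | ArithFixed r} = ((⊥ : Subfield K) : Set K) := by
  classical
  ext r
  simp only [Set.mem_setOf_eq, SetLike.mem_coe]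
  constructor
  · intro hfix
    by_contra hr
    obtain ⟨A, hrA, hall⟩ := hfix
    set R : Subalgebra (⊥ : Subfield K) K := Algebra.adjoin (⊥ : Subfield K) ((A : Set K))
      with hR
    obtain ⟨ψ, hψ⟩ := exists_hom_ne F hF hr A hrA
    set f : K → K := fun x => if h : x ∈ R then ψ ⟨x, h⟩ else x with hf
    have hmem : ∀ x ∈ (A : Set K), x ∈ R := fun x hx => Algebra.subset_adjoin hx
    have hval : ∀ (x : K) (h : x ∈ R), f x = ψ ⟨x, h⟩ := by
      intro x h
      simp only [hf, dif_pos h]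
    have harith : ArithmeticMap (↑A : Set K) f := by
      refine ⟨?_, ?_, ?_⟩
      · intro h1
        rw [hval 1 (Subalgebra.one_mem R)]
        have : (⟨1, Subalgebra.one_mem R⟩ : R) = 1 := rfl
        rw [this, map_one]
      · intro a b ha hb hab
        rw [hval a (hmem a ha), hval b (hmem b hb), hval (a + b) (hmem _ hab)]
        have : (⟨a + b, hmem _ hab⟩ : R) = ⟨a, hmem a ha⟩ + ⟨b, hmem b hb⟩ := rfl
        rw [this, map_add]
      · intro a b ha hb hab
        rw [hval a (hmem a ha), hval b (hmem b hb), hval (a * b) (hmem _ hab)]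
        have : (⟨a * b, hmem _ hab⟩ : R) = ⟨a, hmem a ha⟩ * ⟨b, hmem b hb⟩ := rfl
        rw [this, map_mul]
    have := hall f harith
    rw [hval r (Algebra.subset_adjoin hrA)] at this
    exact hψ this
  · exact arithFixed_of_mem_bot
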